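/- Let G be a directed graph and suppose all infection rates equal β > 0 and all recovery rates equal δ > 0. If ρ(A_{L(G)} + H) ≤ 1, then λ_max(𝒜) < 0 for every β, δ > 0, where 𝒜 = [[−δI, βC_+], [δC_-ᵀ, βHᵀ − (β+2δ)I]]; i.e., the epidemic threshold is infinite. -/

import Mathlib

open Matrix

def IsMetzler {n : Type*} [Fintype n] [DecidableEq n] (M : Matrix n n ℝ) : Prop :=
  ∀ i j, i ≠ j → 0 ≤ M i j

def IsIrreducibleMatrix {n : Type*} [Fintype n] (M : Matrix n n ℝ) : Prop :=
  ∀ i j : n, Relation.ReflTransGen (fun a b => a ≠ b ∧ M a b ≠ 0) i j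

def IsEigOf {n : Type*} [Fintype n] (M : Matrix n n ℝ) (μ : ℂ) : Prop :=
  ∃ v : n → ℂ, v ≠ 0 ∧ M.map (Complex.ofReal) *ᵥ v = μ • v

noncomputable def lamMax {n : Type*} [Fintype n] (M : Matrix n n ℝ) : ℝ :=
  sSup {x : ℝ | ∃ μ : ℂ, IsEigOf M μ ∧ x = μ.re}

noncomputable def specRad {n : Type*} [Fintype n] (M : Matrix n n ℝ) : ℝ :=
  sSup {x : ℝ | ∃ μ : ℂ, IsEigOf M μ ∧ x = ‖μ‖}

noncomputable def Cplus {V E : Type*} [DecidableEq V] (tgt : E → V) : Matrix V E ℝ :=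
  fun i ℓ => if tgt ℓ = i then 1 else 0

noncomputable def Cminus {V E : Type*} [DecidableEq V] (src : E → V) : Matrix V E ℝ :=
  fun i ℓ => if src ℓ = i then 1 else 0

noncomputable def nbMatrix {V E : Type*} [DecidableEq V] (src tgt : E → V) : Matrix E E ℝ :=
  fun ℓ m => if tgt ℓ = src m ∧ tgt m ≠ src ℓ then 1 else 0

noncomputable def lineAdj {V E : Type*} [DecidableEq V] (src tgt : E → V) : Matrix E E ℝ :=
  fun ℓ m => if tgt ℓ = src m then 1 else 0

lemma isEigOf_iff_mem_spectrum {n : Type*} [Fintype n] [DecidableEq n] (M : Matrix n n ℝ)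
    (μ : ℂ) : IsEigOf M μ ↔ μ ∈ spectrum ℂ (M.map (Complex.ofReal)) := by
  rw [← AlgEquiv.spectrum_eq (Matrix.toLinAlgEquiv' : Matrix n n ℂ ≃ₐ[ℂ] _)
      (M.map Complex.ofReal), ← Module.End.hasEigenvalue_iff_mem_spectrum]
  constructor
  · rintro ⟨v, hv, heq⟩
    refine Module.End.hasEigenvalue_of_hasEigenvector (x := v) ⟨?_, hv⟩
    rw [Module.End.mem_eigenspace_iff]
    simpa [Matrix.toLinAlgEquiv'_apply] using heq
  · intro h
    obtain ⟨v, hv1, hv2⟩ := h.exists_hasEigenvector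
    rw [Module.End.mem_eigenspace_iff, Matrix.toLinAlgEquiv'_apply] at hv1
    exact ⟨v, hv2, hv1⟩

lemma isEigOf_transpose {n : Type*} [Fintype n] [DecidableEq n] {M : Matrix n n ℝ} {μ : ℂ}
    (h : IsEigOf Mᵀ μ) : IsEigOf M μ := by
  rw [isEigOf_iff_mem_spectrum] at h ⊢
  rw [spectrum.mem_iff] at h ⊢
  intro hu
  apply h
  rw [Matrix.isUnit_iff_isUnit_det] at hu ⊢
  have : algebraMap ℂ (Matrix n n ℂ) μ - Mᵀ.map Complex.ofReal
      = (algebraMap ℂ (Matrix n n ℂ) μ - M.map Complex.ofReal)ᵀ := by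
    rw [Matrix.transpose_sub, Matrix.transpose_map]
    congr 1
    simp [Matrix.algebraMap_eq_diagonal]
  rw [this, Matrix.det_transpose]
  exact hu

lemma exists_isEigOf {n : Type*} [Fintype n] [DecidableEq n] [Nonempty n]
    (M : Matrix n n ℝ) : ∃ μ : ℂ, IsEigOf M μ := by
  obtain ⟨μ, hμ⟩ := Module.End.exists_eigenvalue
    (Matrix.toLinAlgEquiv' (M.map Complex.ofReal) : Module.End ℂ (n → ℂ))
  rw [Module.End.hasEigenvalue_iff_mem_spectrum,
    AlgEquiv.spectrum_eq (Matrix.toLinAlgEquiv' : Matrix n n ℂ ≃ₐ[ℂ] _)] at hμ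
  exact ⟨μ, (isEigOf_iff_mem_spectrum M μ).2 hμ⟩

lemma norm_le_of_isEigOf {n : Type*} [Fintype n] {M : Matrix n n ℝ} {μ : ℂ}
    (h : IsEigOf M μ) : ‖μ‖ ≤ ∑ i, ∑ j, |M i j| := by
  obtain ⟨v, hv, heq⟩ := h
  obtain ⟨i₀, hi₀⟩ := Function.ne_iff.1 hv
  haveI : Nonempty n := ⟨i₀⟩
  obtain ⟨i, -, hi⟩ := Finset.exists_max_image Finset.univ (fun j => ‖v j‖) ⟨i₀, Finset.mem_univ i₀⟩
  have hvi : 0 < ‖v i‖ := lt_of_lt_of_le (norm_pos_iff.2 hi₀) (hi i₀ (Finset.mem_univ i₀))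
  have key : ‖μ‖ * ‖v i‖ ≤ (∑ k, ∑ j, |M k j|) * ‖v i‖ := by
    have h1 : ‖μ‖ * ‖v i‖ = ‖∑ j, (M i j : ℂ) * v j‖ := by
      have := congrFun heq i
      simp only [Matrix.mulVec, dotProduct, Pi.smul_apply, smul_eq_mul,
        Matrix.map_apply] at this
      rw [← norm_mul, ← this]
    rw [h1]
    calc ‖∑ j, (M i j : ℂ) * v j‖ ≤ ∑ j, ‖(M i j : ℂ) * v j‖ := norm_sum_le _ _
      _ ≤ ∑ j, |M i j| * ‖v i‖ := by
          refine Finset.sum_le_sum fun j _ => ?_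
          rw [norm_mul, Complex.norm_real, Real.norm_eq_abs]
          exact mul_le_mul_of_nonneg_left (hi j (Finset.mem_univ j)) (abs_nonneg _)
      _ = (∑ j, |M i j|) * ‖v i‖ := by rw [Finset.sum_mul]
      _ ≤ (∑ k, ∑ j, |M k j|) * ‖v i‖ := by
          refine mul_le_mul_of_nonneg_right ?_ (norm_nonneg _)
          exact Finset.single_le_sum (f := fun k => ∑ j, |M k j|)
            (fun k _ => Finset.sum_nonneg fun j _ => abs_nonneg _) (Finset.mem_univ i)
  exact le_of_mul_le_mul_right key hvi

lemma pow_entry_nonneg {n : Type*} [Fintype n] [DecidableEq n] {A : Matrix n n ℝ}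
    (hA : ∀ i j, 0 ≤ A i j) (m : ℕ) : ∀ i j, 0 ≤ (A ^ m) i j := by
  induction m with
  | zero => intro i j; by_cases hij : i = j <;> simp [pow_zero, Matrix.one_apply, hij]
  | succ m ih =>
    intro i j
    rw [pow_succ, Matrix.mul_apply]
    exact Finset.sum_nonneg fun k _ => mul_nonneg (ih i k) (hA k j)

lemma mulVec_mono {n : Type*} [Fintype n] {P : Matrix n n ℝ} (hP : ∀ i j, 0 ≤ P i j)
    {u w : n → ℝ} (huw : ∀ j, u j ≤ w j) : ∀ i, (P *ᵥ u) i ≤ (P *ᵥ w) i := fun i =>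
  Finset.sum_le_sum fun j _ => mul_le_mul_of_nonneg_left (huw j) (hP i j)

lemma pow_mulVec_ge {n : Type*} [Fintype n] [DecidableEq n] {A : Matrix n n ℝ}
    (hA : ∀ i j, 0 ≤ A i j) {b : n → ℝ} {c : ℝ} (hc : 0 ≤ c)
    (h : ∀ i, c * b i ≤ (A *ᵥ b) i) (m : ℕ) : ∀ i, c ^ m * b i ≤ ((A ^ m) *ᵥ b) i := by
  induction m with
  | zero => simp
  | succ m ih =>
    intro i
    have step : ((A ^ (m+1)) *ᵥ b) i = ((A ^ m) *ᵥ (A *ᵥ b)) i := by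
      rw [pow_succ, ← Matrix.mulVec_mulVec]
    have h2 : ((A ^ m) *ᵥ (c • b)) i ≤ ((A ^ m) *ᵥ (A *ᵥ b)) i :=
      mulVec_mono (pow_entry_nonneg hA m) (fun j => h j) i
    rw [Matrix.mulVec_smul] at h2
    calc c ^ (m+1) * b i = c * (c ^ m * b i) := by ring
      _ ≤ c * ((A ^ m) *ᵥ b) i := mul_le_mul_of_nonneg_left (ih i) hc
      _ = (c • ((A ^ m) *ᵥ b)) i := rfl
      _ ≤ ((A ^ m) *ᵥ (A *ᵥ b)) i := h2
      _ = ((A ^ (m+1)) *ᵥ b) i := step.symm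

attribute [local instance] Matrix.linftyOpNormedRing Matrix.linftyOpNormedAlgebra

lemma exists_isEigOf_norm_ge {n : Type*} [Fintype n] [DecidableEq n] {A : Matrix n n ℝ}
    (hA : ∀ i j, 0 ≤ A i j) {b : n → ℝ} (hb : ∀ i, 0 ≤ b i) (hb0 : b ≠ 0)
    {c : ℝ} (hc : 0 < c) (h : ∀ i, c * b i ≤ (A *ᵥ b) i) :
    ∃ μ : ℂ, IsEigOf A μ ∧ c ≤ ‖μ‖ := by
  classical
  obtain ⟨i₀, hi₀'⟩ := Function.ne_iff.1 hb0
  have hi₀ : b i₀ ≠ 0 := by simpa using hi₀'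
  haveI : Nonempty n := ⟨i₀⟩
  have hbi₀ : 0 < b i₀ := lt_of_le_of_ne (hb i₀) (Ne.symm hi₀)
  obtain ⟨jm, -, hjm⟩ := Finset.exists_max_image Finset.univ b ⟨i₀, Finset.mem_univ i₀⟩
  set bmax := b jm with hbmax
  have hbmaxpos : 0 < bmax := lt_of_lt_of_le hbi₀ (hjm i₀ (Finset.mem_univ i₀))
  set K : ℝ := b i₀ / bmax with hK
  have hKpos : 0 < K := div_pos hbi₀ hbmaxpos
  set Ac : Matrix n n ℂ := A.map Complex.ofReal with hAc
  haveI : CompleteSpace (Matrix n n ℂ) := FiniteDimensional.complete ℂ _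
  -- norm lower bound for powers
  have hnorm : ∀ m : ℕ, c ^ m * K ≤ ‖Ac ^ m‖ := by
    intro m
    have hpow : Ac ^ m = (A ^ m).map Complex.ofReal := by
      have h := map_pow (Complex.ofRealHom.mapMatrix : Matrix n n ℝ →+* Matrix n n ℂ) A m
      rw [RingHom.mapMatrix_apply, RingHom.mapMatrix_apply] at h
      exact h.symm
    have hrow : ∑ j, (A ^ m) i₀ j ≤ ‖Ac ^ m‖ := by
      have h1 : (∑ j, ‖(Ac ^ m) i₀ j‖₊) ≤ ‖Ac ^ m‖₊ := by
        rw [Matrix.linfty_opNNNorm_def]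
        exact Finset.le_sup (f := fun i => ∑ j, ‖(Ac ^ m) i j‖₊) (Finset.mem_univ i₀)
      have h2 : ((∑ j, ‖(Ac ^ m) i₀ j‖₊ : NNReal) : ℝ) = ∑ j, (A ^ m) i₀ j := by
        push_cast
        refine Finset.sum_congr rfl fun j _ => ?_
        rw [hpow]
        simp [Matrix.map_apply, Complex.norm_real, abs_of_nonneg (pow_entry_nonneg hA m i₀ j)]
      calc ∑ j, (A ^ m) i₀ j = ((∑ j, ‖(Ac ^ m) i₀ j‖₊ : NNReal) : ℝ) := h2.symm
        _ ≤ ((‖Ac ^ m‖₊ : NNReal) : ℝ) := by exact_mod_cast h1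
        _ = ‖Ac ^ m‖ := rfl
    have hv : c ^ m * b i₀ ≤ ((A ^ m) *ᵥ b) i₀ := pow_mulVec_ge hA hc.le h m i₀
    have hub : ((A ^ m) *ᵥ b) i₀ ≤ (∑ j, (A ^ m) i₀ j) * bmax := by
      rw [Matrix.mulVec, dotProduct, Finset.sum_mul]
      exact Finset.sum_le_sum fun j _ =>
        mul_le_mul_of_nonneg_left (hjm j (Finset.mem_univ j)) (pow_entry_nonneg hA m i₀ j)
    rw [hK, ← mul_div_assoc, div_le_iff₀ hbmaxpos]
    calc c ^ m * b i₀ ≤ ((A ^ m) *ᵥ b) i₀ := hv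
      _ ≤ (∑ j, (A ^ m) i₀ j) * bmax := hub
      _ ≤ ‖Ac ^ m‖ * bmax := mul_le_mul_of_nonneg_right hrow hbmaxpos.le
  -- spectral radius lower bound via Gelfand
  have hgelf := spectrum.pow_nnnorm_pow_one_div_tendsto_nhds_spectralRadius Ac
  have hsr : (c.toNNReal : ENNReal) ≤ spectralRadius ℂ Ac := by
    refine ENNReal.le_of_forall_nnreal_lt fun r hr => ?_
    have hrc : (r : ℝ) < c := by
      have := hr
      rw [ENNReal.coe_lt_coe] at this
      calc (r : ℝ) < (c.toNNReal : ℝ) := by exact_mod_cast this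
        _ = c := Real.coe_toNNReal c hc.le
    refine ge_of_tendsto hgelf ?_
    have hclt : (r : ℝ) / c < 1 := (div_lt_one hc).2 hrc
    have h0le : (0:ℝ) ≤ (r:ℝ) / c := div_nonneg r.coe_nonneg hc.le
    have htend := tendsto_pow_atTop_nhds_zero_of_lt_one h0le hclt
    have hev : ∀ᶠ m : ℕ in Filter.atTop, ((r:ℝ)/c) ^ m < K :=
      htend.eventually (Filter.Tendsto.eventually_lt_const hKpos Filter.tendsto_id) |>.mono (by tauto)
    filter_upwards [hev, Filter.eventually_ge_atTop 1] with m hm hm1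
    -- r^m ≤ c^m * K ≤ ‖Ac^m‖
    have h1 : (r : ℝ) ^ m ≤ ‖Ac ^ m‖ := by
      have : (r:ℝ) ^ m ≤ c ^ m * K := by
        have := hm.le
        calc (r:ℝ)^m = ((r:ℝ)/c)^m * c^m := by
              rw [div_pow, div_mul_cancel₀ _ (pow_ne_zero _ hc.ne')]
          _ ≤ K * c ^ m := mul_le_mul_of_nonneg_right this (pow_nonneg hc.le m)
          _ = c ^ m * K := mul_comm _ _
      exact this.trans (hnorm m)
    have h2 : (r : NNReal) ^ m ≤ ‖Ac ^ m‖₊ := by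
      rw [← NNReal.coe_le_coe]
      push_cast
      exact h1
    have h3 : ((r : ENNReal) ^ m) ^ ((1:ℝ)/m) ≤ (‖Ac ^ m‖₊ : ENNReal) ^ ((1:ℝ)/m) := by
      apply ENNReal.rpow_le_rpow _ (by positivity)
      exact_mod_cast h2
    have h4 : ((r : ENNReal) ^ m) ^ ((1:ℝ)/m) = (r : ENNReal) := by
      rw [← ENNReal.rpow_natCast (r : ENNReal) m, ← ENNReal.rpow_mul]
      rw [mul_one_div, div_self (by exact_mod_cast Nat.one_le_iff_ne_zero.1 hm1), ENNReal.rpow_one]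
    rw [← h4]
    exact h3
  obtain ⟨z, hz, hznorm⟩ := spectrum.exists_nnnorm_eq_spectralRadius Ac
  refine ⟨z, (isEigOf_iff_mem_spectrum A z).2 hz, ?_⟩
  rw [← hznorm] at hsr
  have : c.toNNReal ≤ ‖z‖₊ := by exact_mod_cast hsr
  calc c = (c.toNNReal : ℝ) := (Real.coe_toNNReal c hc.le).symm
    _ ≤ (‖z‖₊ : ℝ) := by exact_mod_cast this
    _ = ‖z‖ := rfl

lemma norm_entry_mulVec_le {m n : Type*} [Fintype n] (P : Matrix m n ℝ)
    (hP : ∀ i j, 0 ≤ P i j) (w : n → ℂ) (i : m) :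
    ‖(P.map Complex.ofReal *ᵥ w) i‖ ≤ ∑ j, P i j * ‖w j‖ := by
  rw [Matrix.mulVec, dotProduct]
  refine (norm_sum_le _ _).trans (Finset.sum_le_sum fun j _ => ?_)
  rw [Matrix.map_apply, norm_mul, Complex.norm_real, Real.norm_eq_abs,
    abs_of_nonneg (hP i j)]

theorem stmt16 {N Mn : ℕ} (hN : 0 < N) (src tgt : Fin Mn → Fin N)
    (hρ : specRad (lineAdj src tgt + nbMatrix src tgt) ≤ 1) :
    ∀ β δ : ℝ, 0 < β → 0 < δ →
      lamMax (Matrix.fromBlocks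
          (-(δ • (1 : Matrix (Fin N) (Fin N) ℝ))) (β • Cplus tgt)
          (δ • (Cminus src)ᵀ)
          (β • (nbMatrix src tgt)ᵀ -
            (β + 2 * δ) • (1 : Matrix (Fin Mn) (Fin Mn) ℝ))) < 0 := by
  intro β δ hβ hδ
  set M : Matrix (Fin Mn) (Fin Mn) ℝ := lineAdj src tgt + nbMatrix src tgt with hM
  set 𝒜 : Matrix (Fin N ⊕ Fin Mn) (Fin N ⊕ Fin Mn) ℝ := Matrix.fromBlocks
      (-(δ • (1 : Matrix (Fin N) (Fin N) ℝ))) (β • Cplus tgt)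
      (δ • (Cminus src)ᵀ)
      (β • (nbMatrix src tgt)ᵀ - (β + 2 * δ) • (1 : Matrix (Fin Mn) (Fin Mn) ℝ)) with h𝒜
  set ε : ℝ := min (δ/2) (2*δ^2/(3*δ+β)) with hε
  have hεpos : 0 < ε := lt_min (by linarith) (by positivity)
  have hεδ : ε ≤ δ/2 := min_le_left _ _
  have hε2 : ε * (3*δ+β) ≤ 2*δ^2 := by
    have h1 : ε ≤ 2*δ^2/(3*δ+β) := min_le_right _ _
    rw [le_div_iff₀ (by linarith)] at h1
    linarith
  set c : ℝ := (β+2*δ-ε)*(δ-ε)/(δ*β) with hc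
  have hδε : 0 < δ - ε := by linarith
  have hc1 : 1 < c := by
    rw [hc, lt_div_iff₀ (by positivity)]
    nlinarith [sq_nonneg ε]
  -- key claim
  have key : ∀ μ : ℂ, IsEigOf 𝒜 μ → μ.re ≤ -ε := by
    intro μ hμ
    by_contra hre
    push_neg at hre
    obtain ⟨v, hv0, heq⟩ := hμ
    set x : Fin N → ℂ := fun i => v (Sum.inl i) with hx
    set y : Fin Mn → ℂ := fun ℓ => v (Sum.inr ℓ) with hy
    have hv : v = Sum.elim x y := by funext k; cases k <;> rfl
    rw [hv] at heq
    rw [h𝒜, Matrix.fromBlocks_map, Matrix.fromBlocks_mulVec] at heq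
    have hμv : μ • Sum.elim x y = Sum.elim (μ • x) (μ • y) := by
      funext k; cases k <;> rfl
    rw [hμv] at heq
    have hE1v := congrArg (fun f => f ∘ Sum.inl) heq
    have hE2v := congrArg (fun f => f ∘ Sum.inr) heq
    simp only [Sum.elim_comp_inl, Sum.elim_comp_inr] at hE1v hE2v
    -- simplify the mapped matrices
    have hm1 : (-(δ • (1 : Matrix (Fin N) (Fin N) ℝ))).map Complex.ofReal
        = (-(δ:ℂ)) • (1 : Matrix (Fin N) (Fin N) ℂ) := by
      ext i j
      by_cases h : i = j <;> simp [Matrix.map_apply, Matrix.one_apply, h]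
    have hm2 : (β • Cplus tgt).map Complex.ofReal
        = (β:ℂ) • (Cplus tgt).map Complex.ofReal := by
      ext i j; simp [Matrix.map_apply]
    have hm3 : (δ • (Cminus src)ᵀ).map Complex.ofReal
        = (δ:ℂ) • ((Cminus src)ᵀ).map Complex.ofReal := by
      ext i j; simp [Matrix.map_apply]
    have hm4 : (β • (nbMatrix src tgt)ᵀ - (β + 2 * δ) • (1 : Matrix (Fin Mn) (Fin Mn) ℝ)).map
          Complex.ofReal
        = (β:ℂ) • ((nbMatrix src tgt)ᵀ).map Complex.ofReal
            - ((β:ℂ) + 2*δ) • (1 : Matrix (Fin Mn) (Fin Mn) ℂ) := by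
      ext i j
      by_cases h : i = j <;>
        simp [Matrix.map_apply, Matrix.one_apply, h] <;> push_cast <;> ring
    rw [hm1, hm2] at hE1v
    rw [hm3, hm4] at hE2v
    rw [Matrix.smul_mulVec, Matrix.one_mulVec, Matrix.smul_mulVec] at hE1v
    rw [Matrix.sub_mulVec, Matrix.smul_mulVec, Matrix.smul_mulVec,
      Matrix.smul_mulVec, Matrix.one_mulVec] at hE2v
    -- component equations
    have E1 : ∀ i, (μ + δ) * x i = (β:ℂ) * ((Cplus tgt).map Complex.ofReal *ᵥ y) i := by
      intro i
      have h := congrFun hE1v i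
      simp only [Pi.add_apply, Pi.smul_apply, smul_eq_mul, Pi.neg_apply] at h
      linear_combination -h
    have E2 : ∀ ℓ, (μ + ((β:ℂ) + 2*δ)) * y ℓ
        = (δ:ℂ) * (((Cminus src)ᵀ).map Complex.ofReal *ᵥ x) ℓ
          + (β:ℂ) * (((nbMatrix src tgt)ᵀ).map Complex.ofReal *ᵥ y) ℓ := by
      intro ℓ
      have h := congrFun hE2v ℓ
      simp only [Pi.add_apply, Pi.sub_apply, Pi.smul_apply, smul_eq_mul] at h
      linear_combination -h
    -- norms
    set aa : Fin N → ℝ := fun i => ‖x i‖ with haa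
    set b : Fin Mn → ℝ := fun ℓ => ‖y ℓ‖ with hb
    have hμδ : δ - ε ≤ ‖μ + (δ:ℂ)‖ := by
      have h1 : δ - ε ≤ (μ + (δ:ℂ)).re := by
        simp only [Complex.add_re, Complex.ofReal_re]
        linarith
      exact h1.trans (Complex.re_le_norm _)
    have hμ2 : β + 2*δ - ε ≤ ‖μ + ((β:ℂ) + 2*δ)‖ := by
      have h1 : β + 2*δ - ε ≤ (μ + ((β:ℂ) + 2*δ)).re := by
        simp only [Complex.add_re, Complex.ofReal_re, Complex.mul_re]
        push_cast
        simp
        linarith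
      exact h1.trans (Complex.re_le_norm _)
    have hCp : ∀ (i : Fin N) (ℓ : Fin Mn), 0 ≤ Cplus tgt i ℓ := by
      intro i ℓ; unfold Cplus; positivity
    have hCmT : ∀ (ℓ : Fin Mn) (i : Fin N), 0 ≤ (Cminus src)ᵀ ℓ i := by
      intro ℓ i; unfold Cminus Matrix.transpose; dsimp; positivity
    have hHT : ∀ (ℓ m : Fin Mn), 0 ≤ (nbMatrix src tgt)ᵀ ℓ m := by
      intro ℓ m; unfold nbMatrix Matrix.transpose; dsimp; positivity
    -- n1
    have n1 : ∀ i, (δ - ε) * aa i ≤ β * ∑ ℓ, Cplus tgt i ℓ * b ℓ := by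
      intro i
      have h1 : ‖(μ + δ) * x i‖ = ‖μ + (δ:ℂ)‖ * aa i := by rw [norm_mul]
      have h2 : ‖(β:ℂ) * ((Cplus tgt).map Complex.ofReal *ᵥ y) i‖
          ≤ β * ∑ ℓ, Cplus tgt i ℓ * b ℓ := by
        rw [norm_mul, Complex.norm_real, Real.norm_eq_abs, abs_of_nonneg hβ.le]
        exact mul_le_mul_of_nonneg_left (norm_entry_mulVec_le _ hCp y i) hβ.le
      have := (E1 i)
      calc (δ - ε) * aa i ≤ ‖μ + (δ:ℂ)‖ * aa i :=
            mul_le_mul_of_nonneg_right hμδ (norm_nonneg _)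
        _ = ‖(μ + δ) * x i‖ := h1.symm
        _ = ‖(β:ℂ) * ((Cplus tgt).map Complex.ofReal *ᵥ y) i‖ := by rw [this]
        _ ≤ β * ∑ ℓ, Cplus tgt i ℓ * b ℓ := h2
    -- n2
    have n2 : ∀ ℓ, (β + 2*δ - ε) * b ℓ
        ≤ δ * aa (src ℓ) + β * ∑ m, nbMatrix src tgt m ℓ * b m := by
      intro ℓ
      have hs1 : ‖(((Cminus src)ᵀ).map Complex.ofReal *ᵥ x) ℓ‖ ≤ aa (src ℓ) := by
        refine (norm_entry_mulVec_le _ hCmT x ℓ).trans_eq ?_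
        have : ∀ i, (Cminus src)ᵀ ℓ i * aa i = if src ℓ = i then aa i else 0 := by
          intro i
          unfold Cminus Matrix.transpose; dsimp
          by_cases h : src ℓ = i <;> simp [h]
        rw [Finset.sum_congr rfl (fun i _ => this i), Finset.sum_ite_eq]
        simp
      have hs2 : ‖(((nbMatrix src tgt)ᵀ).map Complex.ofReal *ᵥ y) ℓ‖
          ≤ ∑ m, nbMatrix src tgt m ℓ * b m := by
        refine (norm_entry_mulVec_le _ hHT y ℓ).trans_eq ?_
        exact Finset.sum_congr rfl fun m _ => by rw [Matrix.transpose_apply]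
      calc (β + 2*δ - ε) * b ℓ ≤ ‖μ + ((β:ℂ) + 2*δ)‖ * b ℓ :=
            mul_le_mul_of_nonneg_right hμ2 (norm_nonneg _)
        _ = ‖(μ + ((β:ℂ) + 2*δ)) * y ℓ‖ := by rw [norm_mul]
        _ = ‖(δ:ℂ) * (((Cminus src)ᵀ).map Complex.ofReal *ᵥ x) ℓ
              + (β:ℂ) * (((nbMatrix src tgt)ᵀ).map Complex.ofReal *ᵥ y) ℓ‖ := by rw [E2 ℓ]
        _ ≤ ‖(δ:ℂ) * (((Cminus src)ᵀ).map Complex.ofReal *ᵥ x) ℓ‖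
              + ‖(β:ℂ) * (((nbMatrix src tgt)ᵀ).map Complex.ofReal *ᵥ y) ℓ‖ := norm_add_le _ _
        _ ≤ δ * aa (src ℓ) + β * ∑ m, nbMatrix src tgt m ℓ * b m := by
            rw [norm_mul, norm_mul, Complex.norm_real, Complex.norm_real,
              Real.norm_eq_abs, Real.norm_eq_abs, abs_of_nonneg hδ.le, abs_of_nonneg hβ.le]
            exact add_le_add (mul_le_mul_of_nonneg_left hs1 hδ.le)
              (mul_le_mul_of_nonneg_left hs2 hβ.le)
    -- b is nonzero
    have hbne : b ≠ 0 := by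
      intro hb0
      have hy0 : y = 0 := by
        funext ℓ
        have : ‖y ℓ‖ = 0 := congrFun hb0 ℓ
        simpa using this
      have hx0 : x = 0 := by
        funext i
        have h := E1 i
        rw [hy0] at h
        simp only [Matrix.mulVec_zero, Pi.zero_apply, mul_zero] at h
        have hne : μ + (δ:ℂ) ≠ 0 := by
          intro h0
          rw [h0] at hμδ
          simp at hμδ
          linarith
        have := mul_eq_zero.1 h
        tauto
      apply hv0
      rw [hv, hx0, hy0]
      funext k; cases k <;> rfl
    -- main inequality for Mᵀ
    have hmain : ∀ ℓ, c * b ℓ ≤ (Mᵀ *ᵥ b) ℓ := by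
      intro ℓ
      have hL : ∑ m, Cplus tgt (src ℓ) m * b m = ∑ m, lineAdj src tgt m ℓ * b m := by
        refine Finset.sum_congr rfl fun m _ => ?_
        unfold Cplus lineAdj; rfl
      have h1 := n1 (src ℓ)
      rw [hL] at h1
      have h2 := n2 ℓ
      set L : ℝ := ∑ m, lineAdj src tgt m ℓ * b m with hLdef
      set Hs : ℝ := ∑ m, nbMatrix src tgt m ℓ * b m with hHdef
      have hLnn : 0 ≤ L := Finset.sum_nonneg fun m _ => mul_nonneg
        (by unfold lineAdj; split <;> norm_num) (norm_nonneg _)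
      have hHnn : 0 ≤ Hs := Finset.sum_nonneg fun m _ => mul_nonneg
        (by unfold nbMatrix; split <;> norm_num) (norm_nonneg _)
      have haann : 0 ≤ aa (src ℓ) := norm_nonneg _
      have hbnn : 0 ≤ b ℓ := norm_nonneg _
      have hMT : (Mᵀ *ᵥ b) ℓ = L + Hs := by
        rw [Matrix.mulVec, dotProduct, hLdef, hHdef, ← Finset.sum_add_distrib]
        refine Finset.sum_congr rfl fun m _ => ?_
        rw [Matrix.transpose_apply, hM, Matrix.add_apply]
        ring
      rw [hMT, hc]
      rw [div_mul_eq_mul_div, div_le_iff₀ (by positivity)]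
      nlinarith [mul_le_mul_of_nonneg_left h2 hδε.le, mul_le_mul_of_nonneg_left h1 hδ.le,
        mul_nonneg (mul_nonneg hεpos.le hβ.le) hHnn]
    -- contradiction with spectral radius
    have hMTnn : ∀ i j, 0 ≤ Mᵀ i j := by
      intro i j
      rw [Matrix.transpose_apply, hM, Matrix.add_apply]
      unfold lineAdj nbMatrix; dsimp; positivity
    have hbnn : ∀ ℓ, 0 ≤ b ℓ := fun ℓ => norm_nonneg _
    obtain ⟨θ, hθ, hθge⟩ := exists_isEigOf_norm_ge hMTnn hbnn hbne (by linarith : (0:ℝ) < c) hmain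
    have hθM : IsEigOf M θ := isEigOf_transpose hθ
    have hθle : ‖θ‖ ≤ 1 := by
      refine le_trans ?_ hρ
      rw [specRad]
      apply le_csSup
      · refine ⟨∑ i, ∑ j, |M i j|, ?_⟩
        rintro z ⟨μ', hμ', rfl⟩
        exact norm_le_of_isEigOf hμ'
      · exact ⟨θ, hθM, rfl⟩
    linarith
  -- conclude
  have hne : Nonempty (Fin N ⊕ Fin Mn) := ⟨Sum.inl ⟨0, hN⟩⟩
  obtain ⟨μ₀, hμ₀⟩ := exists_isEigOf 𝒜
  have hSne : {x : ℝ | ∃ μ : ℂ, IsEigOf 𝒜 μ ∧ x = μ.re}.Nonempty := ⟨μ₀.re, μ₀, hμ₀, rfl⟩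
  have : lamMax 𝒜 ≤ -ε := by
    rw [lamMax]
    refine csSup_le hSne ?_
    rintro z ⟨μ', hμ', rfl⟩
    exact key μ' hμ'
  linarith
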